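/- Let m ≥ 1, 1 ≤ k ≤ m, and 0 < τ < √2. Define g : ℝ^k → ℝ by g(w) = 2·Σ_{i=1}^k w_i^2 − τ·√(m + 2·Σ_{i=1}^k w_i^2 + 2·Σ_{i=1}^k w_i^4). Then g(w) ≥ (2 − √2·τ)·‖w‖_2^2 − √2·τ·‖w‖_2 − √m·τ for all w ∈ ℝ^k, and consequently g is coercive: g(w) → +∞ as ‖w‖_2 → ∞. -/

import Mathlib

private lemma sqrt_add_le' {x y : ℝ} (hx : 0 ≤ x) (hy : 0 ≤ y) :
    Real.sqrt (x + y) ≤ Real.sqrt x + Real.sqrt y := by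
  have h : x + y ≤ (Real.sqrt x + Real.sqrt y) ^ 2 := by
    have hx' := Real.sq_sqrt hx
    have hy' := Real.sq_sqrt hy
    nlinarith [Real.sqrt_nonneg x, Real.sqrt_nonneg y]
  calc Real.sqrt (x + y) ≤ Real.sqrt ((Real.sqrt x + Real.sqrt y) ^ 2) := Real.sqrt_le_sqrt h
    _ = Real.sqrt x + Real.sqrt y := Real.sqrt_sq (by positivity)


/-- For `1 ≤ k ≤ m` and `0 < τ < √2`, the function
`g(w) = 2∑ wᵢ² − τ√(m + 2∑ wᵢ² + 2∑ wᵢ⁴)` satisfies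
`g(w) ≥ (2 − √2 τ)‖w‖² − √2 τ ‖w‖ − √m τ` and is coercive. -/
theorem g_lower_bound_and_coercive (m k : ℕ) (hk1 : 1 ≤ k) (hkm : k ≤ m)
    (τ : ℝ) (hτ0 : 0 < τ) (hτ2 : τ < Real.sqrt 2)
    (g : EuclideanSpace ℝ (Fin k) → ℝ)
    (hg : ∀ w, g w = 2 * ∑ i, w i ^ 2
      - τ * Real.sqrt ((m : ℝ) + 2 * ∑ i, w i ^ 2 + 2 * ∑ i, w i ^ 4)) :
    (∀ w, (2 - Real.sqrt 2 * τ) * ‖w‖ ^ 2 - Real.sqrt 2 * τ * ‖w‖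
        - Real.sqrt m * τ ≤ g w) ∧
    Filter.Tendsto g (Filter.cocompact (EuclideanSpace ℝ (Fin k))) Filter.atTop := by
  have key : ∀ w : EuclideanSpace ℝ (Fin k),
      (2 - Real.sqrt 2 * τ) * ‖w‖ ^ 2 - Real.sqrt 2 * τ * ‖w‖
        - Real.sqrt m * τ ≤ g w := by
    intro w
    set S : ℝ := ∑ i, w i ^ 2 with hSdef
    have hS0 : 0 ≤ S := Finset.sum_nonneg fun i _ => sq_nonneg _
    have hnormsq : ‖w‖ ^ 2 = S := by
      rw [EuclideanSpace.norm_eq, Real.sq_sqrt (Finset.sum_nonneg fun i _ => sq_nonneg _)]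
      simp [Real.norm_eq_abs, sq_abs]
      exact hSdef.symm
    have hnorm : ‖w‖ = Real.sqrt S := by
      rw [← hnormsq, Real.sqrt_sq (norm_nonneg w)]
    have hQ : (∑ i, w i ^ 4) ≤ S ^ 2 := by
      have h : ∀ i : Fin k, w i ^ 4 = (w i ^ 2) ^ 2 := fun i => by ring
      simp only [h]
      exact Finset.sum_sq_le_sq_sum_of_nonneg (fun i _ => sq_nonneg _)
    have hQ0 : 0 ≤ ∑ i, w i ^ 4 :=
      Finset.sum_nonneg fun i _ => by positivity
    -- bound the sqrt
    have hsqrt : Real.sqrt ((m : ℝ) + 2 * S + 2 * ∑ i, w i ^ 4)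
        ≤ Real.sqrt m + Real.sqrt 2 * ‖w‖ + Real.sqrt 2 * S := by
      have h1 : Real.sqrt ((m : ℝ) + 2 * S + 2 * ∑ i, w i ^ 4)
          ≤ Real.sqrt ((m : ℝ) + 2 * S) + Real.sqrt (2 * ∑ i, w i ^ 4) :=
        sqrt_add_le' (by positivity) (by positivity)
      have h2 : Real.sqrt ((m : ℝ) + 2 * S) ≤ Real.sqrt m + Real.sqrt (2 * S) :=
        sqrt_add_le' (by positivity) (by positivity)
      have h3 : Real.sqrt (2 * S) = Real.sqrt 2 * ‖w‖ := by
        rw [Real.sqrt_mul (by norm_num), hnorm]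
      have h4 : Real.sqrt (2 * ∑ i, w i ^ 4) ≤ Real.sqrt 2 * S := by
        have : Real.sqrt (2 * ∑ i, w i ^ 4) ≤ Real.sqrt (2 * S ^ 2) :=
          Real.sqrt_le_sqrt (by nlinarith)
        calc Real.sqrt (2 * ∑ i, w i ^ 4) ≤ Real.sqrt (2 * S ^ 2) := this
          _ = Real.sqrt 2 * S := by
              rw [Real.sqrt_mul (by norm_num), Real.sqrt_sq hS0]
      linarith
    have hτ0' : 0 ≤ τ := hτ0.le
    have := mul_le_mul_of_nonneg_left hsqrt hτ0'
    rw [hg w, hnormsq]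
    nlinarith
  refine ⟨key, ?_⟩
  have ha : 0 < 2 - Real.sqrt 2 * τ := by
    have h2 : (Real.sqrt 2) ^ 2 = 2 := Real.sq_sqrt (by norm_num)
    have hs : 0 < Real.sqrt 2 := Real.sqrt_pos.mpr (by norm_num)
    nlinarith
  have hpoly : Filter.Tendsto
      (fun x : ℝ => (2 - Real.sqrt 2 * τ) * x ^ 2 - Real.sqrt 2 * τ * x - Real.sqrt m * τ)
      Filter.atTop Filter.atTop := by
    have h1 : Filter.Tendsto (fun x : ℝ => (2 - Real.sqrt 2 * τ) * x - Real.sqrt 2 * τ)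
        Filter.atTop Filter.atTop :=
      Filter.tendsto_atTop_add_const_right _ _ (Filter.Tendsto.const_mul_atTop ha Filter.tendsto_id)
    have h2 : Filter.Tendsto
        (fun x : ℝ => x * ((2 - Real.sqrt 2 * τ) * x - Real.sqrt 2 * τ) - Real.sqrt m * τ)
        Filter.atTop Filter.atTop :=
      Filter.tendsto_atTop_add_const_right _ _
        (Filter.Tendsto.atTop_mul_atTop₀ Filter.tendsto_id h1)
    refine h2.congr fun x => by ring
  exact Filter.tendsto_atTop_mono key
    (hpoly.comp tendsto_norm_cocompact_atTop)
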